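/- For any scalars a, b > 0 and v ∈ ℝ with |a - b| ≤ ε·a for some ε ∈ (0,1), one has |med(v/a, -1, 1) - med(v/b, -1, 1)| ≤ ε, where med(t, -1, 1) := max(-1, min(t, 1)). -/
import Mathlib


/-- Stability of the truncated ratio under multiplicative perturbation of the denominator. -/
theorem med_ratio_stability (a b v ε : ℝ) (ha : 0 < a) (hb : 0 < b)
    (hε : ε ∈ Set.Ioo (0 : ℝ) 1) (hab : |a - b| ≤ ε * a) :
    |max (-1) (min (v / a) 1) - max (-1) (min (v / b) 1)| ≤ ε := by
  obtain ⟨hε0, hε1⟩ := hε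
  obtain ⟨hab1, hab2⟩ := abs_le.mp hab
  have hba : a * (1 - ε) ≤ b := by nlinarith
  rcases le_or_gt (|v|) b with hv | hv
  · -- Lipschitz case
    have lip : |max (-1) (min (v / a) 1) - max (-1) (min (v / b) 1)| ≤ |v / a - v / b| := by
      rw [max_comm (-1 : ℝ), max_comm (-1 : ℝ)]
      calc |max (min (v / a) 1) (-1) - max (min (v / b) 1) (-1)|
          ≤ |min (v / a) 1 - min (v / b) 1| := abs_max_sub_max_le_abs _ _ _
        _ ≤ max (|v / a - v / b|) (|(1 : ℝ) - 1|) := abs_min_sub_min_le_max _ _ _ _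
        _ = |v / a - v / b| := by simp [abs_nonneg]
    refine lip.trans ?_
    rw [div_sub_div _ _ ha.ne' hb.ne', abs_div, abs_of_pos (mul_pos ha hb),
      div_le_iff₀ (mul_pos ha hb)]
    have h1 : |v * b - a * v| ≤ |v| * |a - b| := by
      rw [show v * b - a * v = v * (b - a) by ring, abs_mul, abs_sub_comm]
    have h3 : |v| * |a - b| ≤ b * (ε * a) := mul_le_mul hv hab (abs_nonneg _) hb.le
    nlinarith
  · rcases le_or_gt 0 v with hv0 | hv0
    · -- v > b > 0
      have hvb : b < v := by rwa [abs_of_nonneg hv0] at hv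
      have hfb : max (-1 : ℝ) (min (v / b) 1) = 1 := by
        have : (1 : ℝ) ≤ v / b := (one_le_div hb).mpr hvb.le
        rw [min_eq_right this, max_eq_right (by norm_num)]
      have hva : 1 - ε ≤ v / a := by
        rw [le_div_iff₀ ha]; nlinarith
      have hle : max (-1 : ℝ) (min (v / a) 1) ≤ 1 :=
        max_le (by norm_num) (min_le_right _ _)
      have hge : 1 - ε ≤ max (-1 : ℝ) (min (v / a) 1) :=
        le_max_of_le_right (le_min hva (by linarith))
      rw [hfb, abs_le]; constructor <;> linarith
    · -- v < -b
      have hvb : v < -b := by rw [abs_of_neg hv0] at hv; linarith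
      have hfb : max (-1 : ℝ) (min (v / b) 1) = -1 := by
        have h1 : v / b ≤ -1 := by rw [div_le_iff₀ hb]; linarith
        rw [min_eq_left (by linarith), max_eq_left h1]
      have hva : v / a ≤ -(1 - ε) := by
        rw [div_le_iff₀ ha]; nlinarith
      have hge : -1 ≤ max (-1 : ℝ) (min (v / a) 1) := le_max_left _ _
      have hle : max (-1 : ℝ) (min (v / a) 1) ≤ -(1 - ε) :=
        max_le (by linarith) (min_le_of_left_le hva)
      rw [hfb, abs_le]; constructor <;> linarith
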